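/- For every tetrahedral erasure channel W, both children lose inertia uniformly: A(W^s) ≤ A(W)·(1 − A(W)/3) and A(W^p) ≤ A(W)·(1 − A(W)/3). -/
import Mathlib


noncomputable section

/-- A quintuple of reals representing a candidate tetrahedral erasure channel
`W = (p, q, r, s, t)`. -/
structure TECQuint where
  p : ℝ
  q : ℝ
  r : ℝ
  s : ℝ
  t : ℝ

namespace TECQuint

/-- `W` is a tetrahedral erasure channel: all five entries are nonnegative and sum to 1. -/
def IsTEC (W : TECQuint) : Prop :=
  0 ≤ W.p ∧ 0 ≤ W.q ∧ 0 ≤ W.r ∧ 0 ≤ W.s ∧ 0 ≤ W.t ∧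
    W.p + W.q + W.r + W.s + W.t = 1

/-- `W` is balanced: `q = r = s`. -/
def Balanced (W : TECQuint) : Prop := W.q = W.r ∧ W.r = W.s

/-- The serial child `W^s`. -/
def ser (W : TECQuint) : TECQuint where
  p := W.p ^ 2
  q := W.p * W.s + W.s * W.q + W.q * W.p
  r := W.p * W.q + W.q * W.r + W.r * W.p
  s := W.p * W.r + W.r * W.s + W.s * W.p
  t := 1 - (W.p ^ 2 + (W.p * W.s + W.s * W.q + W.q * W.p)
      + (W.p * W.q + W.q * W.r + W.r * W.p)
      + (W.p * W.r + W.r * W.s + W.s * W.p))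

/-- The parallel child `W^p`. -/
def par (W : TECQuint) : TECQuint where
  p := 1 - ((W.t * W.s + W.s * W.q + W.q * W.t)
      + (W.t * W.q + W.q * W.r + W.r * W.t)
      + (W.t * W.r + W.r * W.s + W.s * W.t) + W.t ^ 2)
  q := W.t * W.s + W.s * W.q + W.q * W.t
  r := W.t * W.q + W.q * W.r + W.r * W.t
  s := W.t * W.r + W.r * W.s + W.s * W.t
  t := W.t ^ 2

/-- The moment of inertia `A(W) = (q−r)² + (r−s)² + (s−q)²`. -/
def inertia (W : TECQuint) : ℝ :=
  (W.q - W.r) ^ 2 + (W.r - W.s) ^ 2 + (W.s - W.q) ^ 2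

/-- The (conditional) entropy `H(W) = (q+r+s)/2 + t`. -/
def entropy (W : TECQuint) : ℝ := (W.q + W.r + W.s) / 2 + W.t

/-- The edge mass `E(W) = q + r + s`. -/
def edgeMass (W : TECQuint) : ℝ := W.q + W.r + W.s

/-- The Quetelet index `Q(W) = E(W) / (H(W)(1−H(W)))`. -/
def quetelet (W : TECQuint) : ℝ :=
  edgeMass W / (entropy W * (1 - entropy W))

/-- One step of the channel process: `true` picks the serial child, `false` the parallel child. -/
def child (W : TECQuint) (b : Bool) : TECQuint := if b then ser W else par W

/-- The descendant `W^c` of `W` along the string `c ∈ {s,p}^n`. -/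
def descend : TECQuint → {n : ℕ} → (Fin n → Bool) → TECQuint
  | W, 0, _ => W
  | W, _ + 1, c => descend (child W (c 0)) (fun i => c i.succ)

end TECQuint

open TECQuint

lemma cubic_key' (q r s : ℝ) (hq : 0 ≤ q) (hr : 0 ≤ r) (hs : 0 ≤ s) (h1 : q + r + s ≤ 1) :
    ((q-r)^2 + (r-s)^2 + (s-q)^2)^2/3 ≤
      (q+r)*(q-r)^2 + (r+s)*(r-s)^2 + (s+q)*(s-q)^2 := by
  nlinarith [sq_nonneg (q-r), sq_nonneg (r-s), sq_nonneg (s-q), mul_nonneg hq hr,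
    mul_nonneg hr hs, mul_nonneg hs hq, sq_nonneg (q+r+s),
    mul_nonneg (mul_nonneg hq hr) hs, sq_nonneg (q+r-2*s), sq_nonneg (r+s-2*q),
    sq_nonneg (s+q-2*r)]

lemma aux_key' (p q r s t : ℝ) (hp : 0 ≤ p) (hq : 0 ≤ q) (hr : 0 ≤ r) (hs : 0 ≤ s)
    (ht : 0 ≤ t) (hsum : p + q + r + s + t = 1) :
    (p+q)^2*(s-r)^2 + (p+r)^2*(q-s)^2 + (p+s)^2*(r-q)^2 ≤
      ((q-r)^2 + (r-s)^2 + (s-q)^2) * (1 - ((q-r)^2 + (r-s)^2 + (s-q)^2)/3) := by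
  have h1 : q + r + s ≤ 1 := by linarith
  have key := cubic_key' q r s hq hr hs h1
  have c1 : (p+q)^2*(s-r)^2 ≤ (1-(r+s))*(r-s)^2 := by
    nlinarith [sq_nonneg (r-s), mul_nonneg (add_nonneg hp hq) (sq_nonneg (r-s))]
  have c2 : (p+r)^2*(q-s)^2 ≤ (1-(s+q))*(s-q)^2 := by
    nlinarith [sq_nonneg (s-q), mul_nonneg (add_nonneg hp hr) (sq_nonneg (s-q))]
  have c3 : (p+s)^2*(r-q)^2 ≤ (1-(q+r))*(q-r)^2 := by
    nlinarith [sq_nonneg (q-r), mul_nonneg (add_nonneg hp hs) (sq_nonneg (q-r))]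
  nlinarith [key]


theorem uniform_loss_of_inertia (W : TECQuint) (hW : W.IsTEC) :
    inertia (ser W) ≤ inertia W * (1 - inertia W / 3) ∧
      inertia (par W) ≤ inertia W * (1 - inertia W / 3) := by
  obtain ⟨hp, hq, hr, hs, ht, hsum⟩ := hW
  constructor
  · have h := aux_key' W.p W.q W.r W.s W.t hp hq hr hs ht hsum
    have e : inertia (ser W) = (W.p+W.q)^2*(W.s-W.r)^2 + (W.p+W.r)^2*(W.q-W.s)^2
        + (W.p+W.s)^2*(W.r-W.q)^2 := by
      simp only [inertia, ser]; ring
    rw [e]; exact h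
  · have h := aux_key' W.t W.q W.r W.s W.p ht hq hr hs hp (by linarith)
    have e : inertia (par W) = (W.t+W.q)^2*(W.s-W.r)^2 + (W.t+W.r)^2*(W.q-W.s)^2
        + (W.t+W.s)^2*(W.r-W.q)^2 := by
      simp only [inertia, par]; ring
    rw [e]; exact h
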